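/- arXiv:1712.07333 — 5 statements merged into one kernel-verified Lean document; each statement's English description precedes it below -/
import Mathlib

section
/- Let b, μ, λ, a₀ ∈ ℝ with Δ := λ² - 4μ > 0, and define c = -a₀ - 8bμ - bλ² and u(x,t) = a₀ + 3bλ² - 3bΔ tanh²((√Δ/2)(x + ct)). Then u satisfies the KdV equation u_t + u u_x + b u_{xxx} = 0. -/
private lemma tanh_hasDerivAt (x : ℝ) :
    HasDerivAt Real.tanh (1 - Real.tanh x ^ 2) x := by
  have h : HasDerivAt (fun y => Real.sinh y / Real.cosh y)
      ((Real.cosh x * Real.cosh x - Real.sinh x * Real.sinh x) / Real.cosh x ^ 2) x :=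
    (Real.hasDerivAt_sinh x).div (Real.hasDerivAt_cosh x) (Real.cosh_pos x).ne'
  have hfun : (fun y => Real.sinh y / Real.cosh y) = Real.tanh := by
    funext y; rw [Real.tanh_eq_sinh_div_cosh]
  rw [hfun] at h
  convert h using 1
  have hc := (Real.cosh_pos x).ne'
  rw [Real.tanh_eq_sinh_div_cosh]
  field_simp

private lemma tanh_aux (a e x : ℝ) :
    HasDerivAt (fun y => Real.tanh (a * y + e))
      (a * (1 - Real.tanh (a * x + e) ^ 2)) x := by
  have h1 : HasDerivAt (fun y : ℝ => a * y + e) a x := by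
    simpa using ((hasDerivAt_id x).const_mul a).add_const e
  exact ((tanh_hasDerivAt (a * x + e)).comp x h1).congr_deriv (mul_comm _ _)

theorem stmt7 (b mu lam a0 c : ℝ) (hd : lam ^ 2 - 4 * mu > 0)
    (hc : c = -a0 - 8 * b * mu - b * lam ^ 2)
    (u : ℝ → ℝ → ℝ)
    (hu : ∀ x t : ℝ, u x t = a0 + 3 * b * lam ^ 2 -
      3 * b * (lam ^ 2 - 4 * mu) *
        Real.tanh (Real.sqrt (lam ^ 2 - 4 * mu) / 2 * (x + c * t)) ^ 2) :
    ∀ x t : ℝ,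
      deriv (fun s => u x s) t + u x t * deriv (fun y => u y t) x +
        b * deriv (fun y => deriv (fun z => deriv (fun w => u w t) z) y) x = 0 := by
  intro x t
  set k : ℝ := Real.sqrt (lam ^ 2 - 4 * mu) / 2 with hk
  have hk2 : k ^ 2 = (lam ^ 2 - 4 * mu) / 4 := by
    rw [hk, div_pow, Real.sq_sqrt hd.le]; norm_num
  set C : ℝ := 3 * b * (lam ^ 2 - 4 * mu) with hC
  set A : ℝ := a0 + 3 * b * lam ^ 2 with hA
  set e : ℝ := k * c * t with he
  set T : ℝ → ℝ := fun z => Real.tanh (k * z + e) with hT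
  have hTd : ∀ z : ℝ, HasDerivAt T (k * (1 - T z ^ 2)) z := fun z => tanh_aux k e z
  -- x-direction function form
  have hufun : (fun w => u w t) = fun w => A - C * T w ^ 2 := by
    funext w
    rw [hu, hT]
    have : k * (w + c * t) = k * w + e := by rw [he]; ring
    rw [this]
  -- first x-derivative
  have h1 : ∀ z : ℝ, HasDerivAt (fun w => u w t) (-2 * C * k * (T z - T z ^ 3)) z := by
    intro z
    rw [hufun]
    have := (hasDerivAt_const z A).sub (((hTd z).pow 2).const_mul C)
    refine this.congr_deriv ?_
    ring
  have h1d : (fun z => deriv (fun w => u w t) z) = fun z => -2 * C * k * (T z - T z ^ 3) :=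
    funext fun z => (h1 z).deriv
  -- second x-derivative
  have h2 : ∀ z : ℝ, HasDerivAt (fun w => -2 * C * k * (T w - T w ^ 3))
      (-2 * C * k ^ 2 * (1 - 4 * T z ^ 2 + 3 * T z ^ 4)) z := by
    intro z
    have := ((hTd z).sub ((hTd z).pow 3)).const_mul (-2 * C * k)
    refine this.congr_deriv ?_
    ring
  have h2d : (fun y => deriv (fun z => deriv (fun w => u w t) z) y)
      = fun y => -2 * C * k ^ 2 * (1 - 4 * T y ^ 2 + 3 * T y ^ 4) := by
    funext y
    rw [h1d]
    exact (h2 y).deriv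
  -- third x-derivative
  have h3 : HasDerivAt (fun y => -2 * C * k ^ 2 * (1 - 4 * T y ^ 2 + 3 * T y ^ 4))
      (-2 * C * k ^ 3 * (-8 * T x + 12 * T x ^ 3) * (1 - T x ^ 2)) x := by
    have := (((hasDerivAt_const x (1:ℝ)).sub (((hTd x).pow 2).const_mul 4)).add
      (((hTd x).pow 4).const_mul 3)).const_mul (-2 * C * k ^ 2)
    refine this.congr_deriv ?_
    ring
  -- t-derivative
  have hut : HasDerivAt (fun s => u x s) (-2 * C * k * c * (T x - T x ^ 3)) t := by
    have hfun : (fun s => u x s) = fun s => A - C * Real.tanh (k * c * s + k * x) ^ 2 := by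
      funext s
      rw [hu]
      have : k * (x + c * s) = k * c * s + k * x := by ring
      rw [this]
    rw [hfun]
    have htt := tanh_aux (k * c) (k * x) t
    have harg : k * c * t + k * x = k * x + e := by rw [he]; ring
    rw [harg] at htt
    have := (hasDerivAt_const t A).sub ((htt.pow 2).const_mul C)
    rw [harg] at this
    refine this.congr_deriv ?_
    rw [hT]; push_cast; ring
  rw [hut.deriv, hu x t, (h1 x).deriv, h2d, h3.deriv]
  have harg2 : Real.sqrt (lam ^ 2 - 4 * mu) / 2 * (x + c * t) = k * x + e := by
    rw [he, hk]; ring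
  rw [harg2]
  rw [hC] at *
  set S := T x with hS
  linear_combination (-2 * (3 * b * (lam ^ 2 - 4 * mu)) * k * (S - S ^ 3)) * hc +
    (-2 * (3 * b * (lam ^ 2 - 4 * mu)) * b * k * (-8 * S + 12 * S ^ 3) * (1 - S ^ 2)) * hk2
end

section
/- Let b, μ, λ, a₀ ∈ ℝ with Δ := λ² - 4μ > 0, and define c = -a₀ - 8bμ - bλ² and u(x,t) = a₀ + 12bμ + 3bΔ sech²((√Δ/2)(x + ct)). Then u satisfies the KdV equation u_t + u u_x + b u_{xxx} = 0. -/
noncomputable def G (y : ℝ) : ℝ := 1 / Real.cosh y ^ 2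
noncomputable def G1 (y : ℝ) : ℝ := -2 * Real.sinh y / Real.cosh y ^ 3
noncomputable def G2 (y : ℝ) : ℝ :=
  (-2 * Real.cosh y ^ 2 + 6 * Real.sinh y ^ 2) / Real.cosh y ^ 4
noncomputable def G3 (y : ℝ) : ℝ :=
  (16 * Real.sinh y * Real.cosh y ^ 2 - 24 * Real.sinh y ^ 3) / Real.cosh y ^ 5

lemma hG1 (y : ℝ) : HasDerivAt G (G1 y) y := by
  have h : HasDerivAt G _ y := (hasDerivAt_const y (1:ℝ)).div ((Real.hasDerivAt_cosh y).pow 2)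
    (pow_ne_zero 2 (Real.cosh_pos y).ne')
  convert h using 1
  have := (Real.cosh_pos y).ne'
  rw [G1]
  field_simp [G1]
  ring

lemma hG2 (y : ℝ) : HasDerivAt G1 (G2 y) y := by
  have h : HasDerivAt G1 _ y := ((Real.hasDerivAt_sinh y).const_mul (-2)).div ((Real.hasDerivAt_cosh y).pow 3)
    (pow_ne_zero 3 (Real.cosh_pos y).ne')
  convert h using 1
  have := (Real.cosh_pos y).ne'
  rw [G2]
  field_simp [G2]
  ring

lemma hG3 (y : ℝ) : HasDerivAt G2 (G3 y) y := by
  have hnum : HasDerivAt (fun y => -2 * Real.cosh y ^ 2 + 6 * Real.sinh y ^ 2)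
      (-2 * (2 * Real.cosh y * Real.sinh y) + 6 * (2 * Real.sinh y * Real.cosh y)) y := by
    have h1 := ((Real.hasDerivAt_cosh y).pow 2).const_mul (-2 : ℝ)
    have h2 := ((Real.hasDerivAt_sinh y).pow 2).const_mul (6 : ℝ)
    convert (show HasDerivAt (fun y => -2 * Real.cosh y ^ 2 + 6 * Real.sinh y ^ 2) _ y from h1.add h2) using 1
    ring
  have h : HasDerivAt G2 _ y := hnum.div ((Real.hasDerivAt_cosh y).pow 4) (pow_ne_zero 4 (Real.cosh_pos y).ne')
  convert h using 1
  have := (Real.cosh_pos y).ne'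
  rw [G3]
  field_simp [G3]
  ring

lemma hcomp {f f' : ℝ → ℝ} (hf : ∀ y, HasDerivAt f (f' y) y) (a m x : ℝ) :
    HasDerivAt (fun x => f (a * x + m)) (a * f' (a * x + m)) x := by
  have : HasDerivAt (fun x => f (a * x + m)) _ x := (hf (a * x + m)).comp x (((hasDerivAt_id x).const_mul a).add_const m)
  simpa [mul_comm] using this

lemma key (b mu lam a0 c k z : ℝ) (hk2 : k ^ 2 = (lam ^ 2 - 4 * mu) / 4)
    (hc : c = -a0 - 8 * b * mu - b * lam ^ 2) :
    3 * b * (lam ^ 2 - 4 * mu) * (k * c * G1 z) +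
      ((a0 + 12 * b * mu) + 3 * b * (lam ^ 2 - 4 * mu) * (1 / Real.cosh z) ^ 2) *
        (3 * b * (lam ^ 2 - 4 * mu) * (k * G1 z)) +
      b * (3 * b * (lam ^ 2 - 4 * mu) * (k * (k * (k * G3 z)))) = 0 := by
  have hch := (Real.cosh_pos z).ne'
  have hs : Real.sinh z ^ 2 = Real.cosh z ^ 2 - 1 := Real.sinh_sq z
  have hl : lam ^ 2 - 4 * mu = 4 * k ^ 2 := by linarith
  subst hc
  simp only [G1, G3]
  rw [div_pow, one_pow, hl, show lam ^ 2 = 4 * k ^ 2 + 4 * mu by linarith]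
  field_simp
  ring_nf
  linear_combination (-288 * b ^ 2 * k ^ 5 * Real.sinh z) * hs

theorem stmt8 (b mu lam a0 c : ℝ) (hd : lam ^ 2 - 4 * mu > 0)
    (hc : c = -a0 - 8 * b * mu - b * lam ^ 2)
    (u : ℝ → ℝ → ℝ)
    (hu : ∀ x t : ℝ, u x t = a0 + 12 * b * mu +
      3 * b * (lam ^ 2 - 4 * mu) *
        (1 / Real.cosh (Real.sqrt (lam ^ 2 - 4 * mu) / 2 * (x + c * t))) ^ 2) :
    ∀ x t : ℝ,
      deriv (fun s => u x s) t + u x t * deriv (fun y => u y t) x +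
        b * deriv (fun y => deriv (fun z => deriv (fun w => u w t) z) y) x = 0 := by
  intro x t
  set k : ℝ := Real.sqrt (lam ^ 2 - 4 * mu) / 2 with hk
  have hk2 : k ^ 2 = (lam ^ 2 - 4 * mu) / 4 := by
    rw [hk, div_pow, Real.sq_sqrt hd.le]; norm_num
  set A : ℝ := a0 + 12 * b * mu with hA
  set B : ℝ := 3 * b * (lam ^ 2 - 4 * mu) with hB
  set m : ℝ := k * (c * t) with hm
  -- function in x
  have hux : (fun w => u w t) = fun w => A + B * G (k * w + m) := by
    funext w
    rw [hu, hm, hA, hB]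
    simp only [G]
    rw [div_pow, one_pow]
    ring_nf
  have hU1 : ∀ y : ℝ, HasDerivAt (fun w => u w t) (B * (k * G1 (k * y + m))) y := by
    intro y
    rw [hux]
    exact ((hcomp hG1 k m y).const_mul B).const_add A
  have hd1 : (fun z => deriv (fun w => u w t) z) = fun z => B * (k * G1 (k * z + m)) :=
    funext fun z => (hU1 z).deriv
  have hU2 : ∀ y : ℝ, HasDerivAt (fun z => deriv (fun w => u w t) z)
      (B * (k * (k * G2 (k * y + m)))) y := by
    intro y
    rw [hd1]
    exact (((hcomp hG2 k m y).const_mul k).const_mul B)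
  have hd2 : (fun y => deriv (fun z => deriv (fun w => u w t) z) y) =
      fun y => B * (k * (k * G2 (k * y + m))) := funext fun y => (hU2 y).deriv
  have hU3 : HasDerivAt (fun y => deriv (fun z => deriv (fun w => u w t) z) y)
      (B * (k * (k * (k * G3 (k * x + m))))) x := by
    rw [hd2]
    exact ((((hcomp hG3 k m x).const_mul k).const_mul k).const_mul B)
  -- function in t
  have hut : (fun s => u x s) = fun s => A + B * G ((k * c) * s + k * x) := by
    funext s
    rw [hu, hA, hB]
    simp only [G]
    rw [div_pow, one_pow]
    ring_nf
  have hT : HasDerivAt (fun s => u x s) (B * ((k * c) * G1 ((k * c) * t + k * x))) t := by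
    rw [hut]
    exact ((hcomp hG1 (k * c) (k * x) t).const_mul B).const_add A
  rw [hT.deriv, (hU1 x).deriv, hU3.deriv, hu]
  have harg : (k * c) * t + k * x = k * x + m := by rw [hm]; ring
  have harg2 : Real.sqrt (lam ^ 2 - 4 * mu) / 2 * (x + c * t) = k * x + m := by
    rw [hm, hk]; ring
  rw [harg, harg2]
  set z : ℝ := k * x + m
  rw [hB, hA]
  exact key b mu lam a0 c k z hk2 hc
end

section
/- Let b, μ, λ, a₀ ∈ ℝ with Δ := 4μ - λ² > 0, and define c = -a₀ - 8bμ - bλ² and u(x,t) = a₀ + 3bλ² - 3bΔ tan²((√Δ/2)(x + ct)). Then at every point (x,t) where cos((√Δ/2)(x + ct)) ≠ 0, u satisfies u_t + u u_x + b u_{xxx} = 0. -/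
open Real

private lemma tan_deriv (p q x : ℝ) (h : Real.cos (p*x+q) ≠ 0) :
    HasDerivAt (fun y => Real.tan (p*y+q)) (p*(1+Real.tan (p*x+q)^2)) x := by
  have h1 : HasDerivAt (fun y : ℝ => p*y+q) p x := by
    simpa using ((hasDerivAt_id x).const_mul p).add_const q
  have h2 := (Real.hasDerivAt_tan h).comp x h1
  refine h2.congr_deriv ?_
  rw [Real.tan_eq_sin_div_cos]
  have h3 := Real.sin_sq_add_cos_sq (p*x+q)
  field_simp
  linear_combination (-p) * h3

private lemma DA (C1 C2 p q x : ℝ) (h : Real.cos (p*x+q) ≠ 0) :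
    HasDerivAt (fun y => C1 + C2 * Real.tan (p*y+q)^2)
      (C2*2*p*(Real.tan (p*x+q)+Real.tan (p*x+q)^3)) x := by
  have := (((tan_deriv p q x h).pow 2).const_mul C2).const_add C1
  refine this.congr_deriv ?_
  push_cast
  ring

private lemma DB (C2 p q x : ℝ) (h : Real.cos (p*x+q) ≠ 0) :
    HasDerivAt (fun y => C2*2*p*(Real.tan (p*y+q)+Real.tan (p*y+q)^3))
      (C2*2*p^2*(1+Real.tan (p*x+q)^2)*(1+3*Real.tan (p*x+q)^2)) x := by
  have := (((tan_deriv p q x h).add ((tan_deriv p q x h).pow 3)).const_mul (C2*2*p))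
  refine this.congr_deriv ?_
  push_cast
  ring

private lemma DC (C2 p q x : ℝ) (h : Real.cos (p*x+q) ≠ 0) :
    HasDerivAt (fun y => C2*2*p^2*(1+Real.tan (p*y+q)^2)*(1+3*Real.tan (p*y+q)^2))
      (C2*2*p^3*(8*Real.tan (p*x+q)+12*Real.tan (p*x+q)^3)*(1+Real.tan (p*x+q)^2)) x := by
  have hT := tan_deriv p q x h
  have := ((((hT.pow 2).const_add 1).const_mul (C2*2*p^2)).mul (((hT.pow 2).const_mul 3).const_add 1))
  refine this.congr_deriv ?_
  push_cast
  simp only [Pi.pow_apply]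
  ring

private lemma hopen (p q : ℝ) : IsOpen {y : ℝ | Real.cos (p*y+q) ≠ 0} :=
  isOpen_compl_singleton.preimage (by continuity)

private lemma d2eq (C1 C2 p q x : ℝ) (h : Real.cos (p*x+q) ≠ 0) :
    deriv (fun z => deriv (fun w => C1 + C2 * Real.tan (p*w+q)^2) z) x
      = C2*2*p^2*(1+Real.tan (p*x+q)^2)*(1+3*Real.tan (p*x+q)^2) := by
  have heq : (fun z => deriv (fun w => C1 + C2 * Real.tan (p*w+q)^2) z)
      =ᶠ[nhds x] (fun y => C2*2*p*(Real.tan (p*y+q)+Real.tan (p*y+q)^3)) := by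
    filter_upwards [(hopen p q).mem_nhds h] with y hy using (DA C1 C2 p q y hy).deriv
  rw [heq.deriv_eq]
  exact (DB C2 p q x h).deriv

private lemma d3eq (C1 C2 p q x : ℝ) (h : Real.cos (p*x+q) ≠ 0) :
    deriv (fun y => deriv (fun z => deriv (fun w => C1 + C2 * Real.tan (p*w+q)^2) z) y) x
      = C2*2*p^3*(8*Real.tan (p*x+q)+12*Real.tan (p*x+q)^3)*(1+Real.tan (p*x+q)^2) := by
  have heq : (fun y => deriv (fun z => deriv (fun w => C1 + C2 * Real.tan (p*w+q)^2) z) y)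
      =ᶠ[nhds x] (fun y => C2*2*p^2*(1+Real.tan (p*y+q)^2)*(1+3*Real.tan (p*y+q)^2)) := by
    filter_upwards [(hopen p q).mem_nhds h] with y hy using d2eq C1 C2 p q y hy
  rw [heq.deriv_eq]
  exact (DC C2 p q x h).deriv

theorem stmt9 (b mu lam a0 c : ℝ) (hd : 4 * mu - lam ^ 2 > 0)
    (hc : c = -a0 - 8 * b * mu - b * lam ^ 2)
    (u : ℝ → ℝ → ℝ)
    (hu : ∀ x t : ℝ, u x t = a0 + 3 * b * lam ^ 2 -
      3 * b * (4 * mu - lam ^ 2) *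
        Real.tan (Real.sqrt (4 * mu - lam ^ 2) / 2 * (x + c * t)) ^ 2) :
    ∀ x t : ℝ, Real.cos (Real.sqrt (4 * mu - lam ^ 2) / 2 * (x + c * t)) ≠ 0 →
      deriv (fun s => u x s) t + u x t * deriv (fun y => u y t) x +
        b * deriv (fun y => deriv (fun z => deriv (fun w => u w t) z) y) x = 0 := by
  intro x t hcos
  set K := Real.sqrt (4 * mu - lam ^ 2) with hKdef
  have hK : K ^ 2 = 4 * mu - lam ^ 2 := Real.sq_sqrt hd.le
  set C1 := a0 + 3 * b * lam ^ 2 with hC1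
  set C2 := -(3 * b * (4 * mu - lam ^ 2)) with hC2
  have hxfun : (fun w => u w t) = (fun w => C1 + C2 * Real.tan (K/2*w + K/2*(c*t))^2) := by
    funext w
    rw [hu, show K/2*(w + c*t) = K/2*w + K/2*(c*t) from by ring]
    ring
  have htfun : (fun s => u x s) = (fun s => C1 + C2 * Real.tan ((K/2*c)*s + K/2*x)^2) := by
    funext s
    rw [hu, show K/2*(x + c*s) = (K/2*c)*s + K/2*x from by ring]
    ring
  have hc1 : Real.cos (K/2*x + K/2*(c*t)) ≠ 0 := by
    rw [show K/2*x + K/2*(c*t) = K/2*(x+c*t) from by ring]; exact hcos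
  have hc2 : Real.cos ((K/2*c)*t + K/2*x) ≠ 0 := by
    rw [show (K/2*c)*t + K/2*x = K/2*(x+c*t) from by ring]; exact hcos
  rw [htfun, hxfun, hu x t,
    (DA C1 C2 (K/2*c) (K/2*x) t hc2).deriv,
    (DA C1 C2 (K/2) (K/2*(c*t)) x hc1).deriv,
    d3eq C1 C2 (K/2) (K/2*(c*t)) x hc1,
    show (K/2*c)*t + K/2*x = K/2*(x+c*t) from by ring,
    show K/2*x + K/2*(c*t) = K/2*(x+c*t) from by ring]
  set T := Real.tan (K/2*(x+c*t)) with hT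
  subst hc
  rw [hC2]
  linear_combination (K * (b * (-(3 * b * (4 * mu - lam ^ 2))) / 4) * (8*T+12*T^3) * (1+T^2)) * hK
end

section
/- Let b, λ, a₀, A, B ∈ ℝ with B ≠ 0, μ = λ²/4, c = -a₀ - 8bμ - bλ², and define u(x,t) = a₀ + 3bλ² - 12bB²/(A + B(x + ct))². Then at every point (x,t) with A + B(x + ct) ≠ 0, u satisfies the KdV equation u_t + u u_x + b u_{xxx} = 0. -/
/-- Derivative of `K * (p + q*y)^m` (integer power) at a point where `p + q*x ≠ 0`. -/
lemma auxD (p q K : ℝ) (m : ℤ) (x : ℝ) (hx : p + q * x ≠ 0) :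
    HasDerivAt (fun y => K * (p + q * y) ^ m) (K * m * q * (p + q * x) ^ (m - 1)) x := by
  have h1 : HasDerivAt (fun y : ℝ => p + q * y) q x := by
    simpa using ((hasDerivAt_id x).const_mul q).const_add p
  have h2 := ((hasDerivAt_zpow m (p + q * x) (Or.inl hx)).comp x h1).const_mul K
  exact h2.congr_deriv (by ring)

theorem stmt10 (b lam a0 A B mu c : ℝ) (hB : B ≠ 0)
    (hmu : mu = lam ^ 2 / 4) (hc : c = -a0 - 8 * b * mu - b * lam ^ 2)
    (u : ℝ → ℝ → ℝ)
    (hu : ∀ x t : ℝ, u x t = a0 + 3 * b * lam ^ 2 -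
      12 * b * B ^ 2 / (A + B * (x + c * t)) ^ 2) :
    ∀ x t : ℝ, A + B * (x + c * t) ≠ 0 →
      deriv (fun s => u x s) t + u x t * deriv (fun y => u y t) x +
        b * deriv (fun y => deriv (fun z => deriv (fun w => u w t) z) y) x = 0 := by
  intro x t hx
  set D : ℝ := a0 + 3 * b * lam ^ 2 with hD
  set p : ℝ := A + B * c * t with hp
  have hpx : ∀ y : ℝ, A + B * (y + c * t) = p + B * y := fun y => by rw [hp]; ring
  have hx' : p + B * x ≠ 0 := by rw [← hpx]; exact hx
  have ezpow : ∀ g : ℝ, g ^ (-2 : ℤ) = (g ^ 2)⁻¹ := fun g => by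
    rw [show ((-2 : ℤ)) = -(2 : ℕ) by norm_num, zpow_neg, zpow_natCast]
  -- u as a function of y (for fixed t), expressed with zpow
  have huy : ∀ y : ℝ, u y t = D + (-12 * b * B ^ 2) * (p + B * y) ^ (-2 : ℤ) := by
    intro y
    rw [hu, hpx, hD, ezpow]
    ring
  -- time derivative
  have ht : HasDerivAt (fun s => u x s) (24 * b * B ^ 3 * c * (p + B * x) ^ (-3 : ℤ)) t := by
    have hne : (A + B * x) + (B * c) * t ≠ 0 := by
      rw [show (A + B * x) + B * c * t = p + B * x by rw [hp]; ring]; exact hx'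
    have h := (auxD (A + B * x) (B * c) (-12 * b * B ^ 2) (-2) t hne).const_add D
    have h' : HasDerivAt (fun s => u x s)
        (-12 * b * B ^ 2 * ((-2 : ℤ) : ℝ) * (B * c) * ((A + B * x) + (B * c) * t) ^ ((-2 : ℤ) - 1)) t := by
      refine h.congr_of_eventuallyEq (Filter.Eventually.of_forall fun s => ?_)
      show u x s = _
      simp only [hu, hD, ezpow]
      rw [show A + B * (x + c * s) = (A + B * x) + B * c * s by ring]
      ring
    have hpt : (A + B * x) + (B * c) * t = p + B * x := by rw [hp]; ring
    rw [hpt] at h'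
    rw [show ((-2 : ℤ) - 1) = (-3 : ℤ) by norm_num] at h'
    convert h' using 1
    push_cast
    ring
  -- first spatial derivative
  have hd1 : ∀ y : ℝ, p + B * y ≠ 0 → HasDerivAt (fun w => u w t)
      (24 * b * B ^ 3 * (p + B * y) ^ (-3 : ℤ)) y := by
    intro y hy
    have h := (auxD p B (-12 * b * B ^ 2) (-2) y hy).const_add D
    have h' : HasDerivAt (fun w => u w t)
        (-12 * b * B ^ 2 * ((-2 : ℤ) : ℝ) * B * (p + B * y) ^ ((-2 : ℤ) - 1)) y :=
      h.congr_of_eventuallyEq (Filter.Eventually.of_forall fun w => huy w)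
    rw [show ((-2 : ℤ) - 1) = (-3 : ℤ) by norm_num] at h'
    convert h' using 1
    push_cast
    ring
  have hS : ∀ y : ℝ, p + B * y ≠ 0 → ∀ᶠ w in nhds y, p + B * w ≠ 0 := by
    intro y hy
    have hcont : ContinuousAt (fun w : ℝ => p + B * w) y := by fun_prop
    exact hcont.eventually_ne hy
  have hder1 : ∀ y : ℝ, p + B * y ≠ 0 →
      deriv (fun w => u w t) y = 24 * b * B ^ 3 * (p + B * y) ^ (-3 : ℤ) :=
    fun y hy => (hd1 y hy).deriv
  -- second spatial derivative
  have hd2 : ∀ y : ℝ, p + B * y ≠ 0 → HasDerivAt (fun z => deriv (fun w => u w t) z)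
      (-72 * b * B ^ 4 * (p + B * y) ^ (-4 : ℤ)) y := by
    intro y hy
    have h := auxD p B (24 * b * B ^ 3) (-3) y hy
    have h' : HasDerivAt (fun z => deriv (fun w => u w t) z)
        (24 * b * B ^ 3 * ((-3 : ℤ) : ℝ) * B * (p + B * y) ^ ((-3 : ℤ) - 1)) y := by
      refine h.congr_of_eventuallyEq ?_
      filter_upwards [hS y hy] with w hw
      exact hder1 w hw
    rw [show ((-3 : ℤ) - 1) = (-4 : ℤ) by norm_num] at h'
    convert h' using 1
    push_cast
    ring
  have hder2 : ∀ y : ℝ, p + B * y ≠ 0 →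
      deriv (fun z => deriv (fun w => u w t) z) y
        = -72 * b * B ^ 4 * (p + B * y) ^ (-4 : ℤ) :=
    fun y hy => (hd2 y hy).deriv
  -- third spatial derivative at x
  have hd3 : HasDerivAt (fun y => deriv (fun z => deriv (fun w => u w t) z) y)
      (288 * b * B ^ 5 * (p + B * x) ^ (-5 : ℤ)) x := by
    have h := auxD p B (-72 * b * B ^ 4) (-4) x hx'
    have h' : HasDerivAt (fun y => deriv (fun z => deriv (fun w => u w t) z) y)
        (-72 * b * B ^ 4 * ((-4 : ℤ) : ℝ) * B * (p + B * x) ^ ((-4 : ℤ) - 1)) x := by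
      refine h.congr_of_eventuallyEq ?_
      filter_upwards [hS x hx'] with w hw
      exact hder2 w hw
    rw [show ((-4 : ℤ) - 1) = (-5 : ℤ) by norm_num] at h'
    convert h' using 1
    push_cast
    ring
  -- assemble
  rw [ht.deriv, hd3.deriv, hder1 x hx', huy x]
  have hDc : D = -c := by rw [hD, hc, hmu]; ring
  have e3 : ((p + B * x) ^ (-3 : ℤ)) = ((p + B * x) ^ 3)⁻¹ := by
    rw [show ((-3 : ℤ)) = -(3 : ℕ) by norm_num, zpow_neg, zpow_natCast]
  have e5 : ((p + B * x) ^ (-5 : ℤ)) = ((p + B * x) ^ 5)⁻¹ := by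
    rw [show ((-5 : ℤ)) = -(5 : ℕ) by norm_num, zpow_neg, zpow_natCast]
  rw [ezpow, e3, e5, hDc]
  field_simp
  ring
end

section
/- Let b > 0, λ, μ ∈ ℝ with Δ := 4μ - λ² > 0, and define c = λ²b/2 - 2bμ and u(x,t) = (1/2)√(6b)·√Δ · tan((√Δ/2)(x + ct)). Then at every point where cos((√Δ/2)(x + ct)) ≠ 0, u satisfies u_t - u² u_x + b u_{xxx} = 0. -/
open Real Filter Topology

theorem stmt12 (b lam mu c : ℝ) (hb : b > 0) (hd : 4 * mu - lam ^ 2 > 0)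
    (hc : c = lam ^ 2 * b / 2 - 2 * b * mu)
    (u : ℝ → ℝ → ℝ)
    (hu : ∀ x t : ℝ, u x t = 1 / 2 * Real.sqrt (6 * b) * Real.sqrt (4 * mu - lam ^ 2) *
      Real.tan (Real.sqrt (4 * mu - lam ^ 2) / 2 * (x + c * t))) :
    ∀ x t : ℝ, Real.cos (Real.sqrt (4 * mu - lam ^ 2) / 2 * (x + c * t)) ≠ 0 →
      deriv (fun s => u x s) t - (u x t) ^ 2 * deriv (fun y => u y t) x +
        b * deriv (fun y => deriv (fun z => deriv (fun w => u w t) z) y) x = 0 := by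
  intro x t hx
  set d := Real.sqrt (4 * mu - lam ^ 2) with hdef
  set s := Real.sqrt (6 * b) with hsdef
  have hd2 : d ^ 2 = 4 * mu - lam ^ 2 := Real.sq_sqrt hd.le
  have hs2 : s ^ 2 = 6 * b := Real.sq_sqrt (by linarith)
  set k := d / 2 with hk
  set A := 1 / 2 * s * d with hA
  -- tan derivative helper
  have htan : ∀ y : ℝ, Real.cos y ≠ 0 →
      HasDerivAt Real.tan (1 + Real.tan y ^ 2) y := by
    intro y hy
    have h := Real.hasDerivAt_tan hy
    convert h using 1
    rw [Real.tan_eq_sin_div_cos]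
    field_simp
    exact cos_sq_add_sin_sq y
  set S : Set ℝ := {y : ℝ | Real.cos (k * (y + c * t)) ≠ 0} with hS
  have hSopen : IsOpen S := by
    have : Continuous fun y : ℝ => Real.cos (k * (y + c * t)) := by continuity
    exact isOpen_compl_singleton.preimage this
  have hxS : x ∈ S := hx
  set tn : ℝ → ℝ := fun y => Real.tan (k * (y + c * t)) with htn
  have hT : ∀ y ∈ S, HasDerivAt tn (k * (1 + tn y ^ 2)) y := by
    intro y hy
    have hinner : HasDerivAt (fun w : ℝ => k * (w + c * t)) k y := by
      simpa using ((hasDerivAt_id y).add_const (c * t)).const_mul k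
    have := (htan _ hy).comp y hinner
    refine this.congr_deriv ?_
    ring
  have hU : ∀ y ∈ S, HasDerivAt (fun w => u w t) (A * k * (1 + tn y ^ 2)) y := by
    intro y hy
    have := (hT y hy).const_mul A
    simp only [hu]
    refine this.congr_deriv ?_
    ring
  have hmem : ∀ y ∈ S, S ∈ 𝓝 y := fun y hy => hSopen.mem_nhds hy
  have hD1 : ∀ y ∈ S, deriv (fun w => u w t) y = A * k * (1 + tn y ^ 2) :=
    fun y hy => (hU y hy).deriv
  have hG1 : ∀ y ∈ S, HasDerivAt (fun z => A * k * (1 + tn z ^ 2))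
      (A * k ^ 2 * (2 * tn y + 2 * tn y ^ 3)) y := by
    intro y hy
    have := (((hT y hy).pow 2).const_add 1).const_mul (A * k)
    refine this.congr_deriv ?_
    ring
  have hD2 : ∀ y ∈ S, deriv (fun z => deriv (fun w => u w t) z) y =
      A * k ^ 2 * (2 * tn y + 2 * tn y ^ 3) := by
    intro y hy
    have hEq : (fun z => deriv (fun w => u w t) z) =ᶠ[𝓝 y]
        (fun z => A * k * (1 + tn z ^ 2)) :=
      Filter.eventuallyEq_of_mem (hmem y hy) (fun z hz => hD1 z hz)
    rw [hEq.deriv_eq]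
    exact (hG1 y hy).deriv
  have hG2 : HasDerivAt (fun z => A * k ^ 2 * (2 * tn z + 2 * tn z ^ 3))
      (A * k ^ 3 * (2 + 8 * tn x ^ 2 + 6 * tn x ^ 4)) x := by
    have h1 := (hT x hxS).const_mul 2
    have h2 := ((hT x hxS).pow 3).const_mul 2
    have := (h1.add h2).const_mul (A * k ^ 2)
    refine this.congr_deriv ?_
    ring
  have hD3 : deriv (fun y => deriv (fun z => deriv (fun w => u w t) z) y) x =
      A * k ^ 3 * (2 + 8 * tn x ^ 2 + 6 * tn x ^ 4) := by
    have hEq : (fun y => deriv (fun z => deriv (fun w => u w t) z) y) =ᶠ[𝓝 x]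
        (fun z => A * k ^ 2 * (2 * tn z + 2 * tn z ^ 3)) :=
      Filter.eventuallyEq_of_mem (hmem x hxS) (fun z hz => hD2 z hz)
    rw [hEq.deriv_eq]
    exact hG2.deriv
  have hUt : deriv (fun s' => u x s') t = A * (1 + tn x ^ 2) * (k * c) := by
    have hinner : HasDerivAt (fun s' : ℝ => k * (x + c * s')) (k * c) t := by
      have := (((hasDerivAt_id t).const_mul c).const_add x).const_mul k
      simpa using this
    have := ((htan _ hx).comp t hinner).const_mul A
    have h2 : HasDerivAt (fun s' => u x s') (A * (1 + tn x ^ 2) * (k * c)) t := by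
      simp only [hu]
      refine this.congr_deriv ?_
      ring
    exact h2.deriv
  rw [hUt, hD3, hD1 x hxS, show u x t = A * tn x from hu x t]
  have hc' : c = -(b * d ^ 2) / 2 := by rw [hc, hd2]; ring
  have hA2 : A ^ 2 = 3 / 2 * b * d ^ 2 := by
    have h : A ^ 2 = 1 / 4 * s ^ 2 * d ^ 2 := by rw [hA]; ring
    rw [h, hs2]; ring
  rw [hk]
  linear_combination (A * (1 + tn x ^ 2) * (d / 2)) * hc' +
    (-(A * (d / 2) * tn x ^ 2 * (1 + tn x ^ 2))) * hA2
end
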